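/- If an irrational number ω ∈ (0,1) belongs to KL⁺(T,N) for some T > 0 and N ∈ ℕ, then there exists C > 0 such that ω is (C,τ)-Diophantine with τ = 1 + (κ + T)/log φ, where φ = (1+√5)/2 is the golden ratio. -/

import Mathlib

open Set

noncomputable section

/-- The Gauss map `G(x) = 1/x - ⌊1/x⌋`. -/
def gaussMap (x : ℝ) : ℝ := 1 / x - (⌊1 / x⌋ : ℝ)

/-- The `n`-th partial quotient `a_n(ω) = ⌊1 / G^{n-1}(ω)⌋` (for `n ≥ 1`). -/
def pq (ω : ℝ) (n : ℕ) : ℤ := ⌊1 / (gaussMap^[n - 1] ω)⌋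

/-- `M_n(ω) = a_1(ω) ⋯ a_n(ω)`. -/
def Mprod (ω : ℝ) (n : ℕ) : ℝ := ∏ j ∈ Finset.Icc 1 n, (pq ω j : ℝ)

/-- Khintchine's constant exponent `κ`. -/
def kappa : ℝ := ∫ x in Ioo (0 : ℝ) 1, Real.log (⌊1 / x⌋ : ℝ) / ((1 + x) * Real.log 2)

/-- `ω` is `(C,τ)`-Diophantine: `|qω − p| ≥ C/q^τ` for all integers `p` and positive integers
`q`. -/
def IsDiophantine (C τ ω : ℝ) : Prop :=
  ∀ p q : ℤ, 0 < q → C / (q : ℝ) ^ τ ≤ |(q : ℝ) * ω - (p : ℝ)|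

end

noncomputable section CF

/-- `a_{n+1}`, zero-indexed. -/
def cfA (ω : ℝ) (n : ℕ) : ℤ := ⌊1 / (gaussMap^[n] ω)⌋

/-- Numerators of convergents. -/
def cfP (ω : ℝ) : ℕ → ℤ
  | 0 => 0
  | 1 => 1
  | n + 2 => cfA ω (n + 1) * cfP ω (n + 1) + cfP ω n

/-- Denominators of convergents. -/
def cfQ (ω : ℝ) : ℕ → ℤ
  | 0 => 1
  | 1 => cfA ω 0
  | n + 2 => cfA ω (n + 1) * cfQ ω (n + 1) + cfQ ω n

/-- `∏_{k=0}^{n} G^[k] ω`. -/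
def cfProd (ω : ℝ) (n : ℕ) : ℝ := ∏ k ∈ Finset.range (n + 1), gaussMap^[k] ω

variable {ω : ℝ}

lemma gauss_iter (hω : Irrational ω) (hmem : ω ∈ Ioo (0 : ℝ) 1) (n : ℕ) :
    Irrational (gaussMap^[n] ω) ∧ gaussMap^[n] ω ∈ Ioo (0 : ℝ) 1 := by
  induction n with
  | zero => exact ⟨hω, hmem⟩
  | succ n ih =>
    rw [Function.iterate_succ_apply']
    set y := gaussMap^[n] ω with hy
    have h2 := ih.2.1
    have h3 := ih.2.2
    have hinv : Irrational (1 / y) := by rw [one_div]; exact ih.1.inv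
    have hirr : Irrational (gaussMap y) := hinv.sub_intCast _
    have hlt : gaussMap y < 1 := by
      have := Int.sub_one_lt_floor (1 / y)
      unfold gaussMap; linarith
    have hle : 0 ≤ gaussMap y := by
      have := Int.floor_le (1 / y)
      unfold gaussMap; linarith
    exact ⟨hirr, lt_of_le_of_ne hle (fun h => hirr.ne_zero h.symm), hlt⟩

lemma cfA_pos (hω : Irrational ω) (hmem : ω ∈ Ioo (0 : ℝ) 1) (n : ℕ) : 1 ≤ cfA ω n := by
  obtain ⟨_, h2, h3⟩ := gauss_iter hω hmem n
  exact Int.le_floor.2 (by exact_mod_cast one_le_one_div h2 h3.le)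

lemma cfA_rel (n : ℕ) :
    (cfA ω n : ℝ) = 1 / gaussMap^[n] ω - gaussMap^[n + 1] ω := by
  rw [Function.iterate_succ_apply']
  unfold cfA gaussMap
  ring

lemma cfProd_succ (n : ℕ) : cfProd ω (n + 1) = cfProd ω n * gaussMap^[n + 1] ω :=
  Finset.prod_range_succ _ _

lemma cfProd_pos (hω : Irrational ω) (hmem : ω ∈ Ioo (0 : ℝ) 1) (n : ℕ) :
    0 < cfProd ω n :=
  Finset.prod_pos fun k _ => (gauss_iter hω hmem k).2.1

lemma cfProd_le (hω : Irrational ω) (hmem : ω ∈ Ioo (0 : ℝ) 1) (n : ℕ) :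
    cfProd ω (n + 1) ≤ cfProd ω n := by
  rw [cfProd_succ]
  have h1 := cfProd_pos hω hmem n
  have h2 := (gauss_iter hω hmem (n + 1)).2.2
  nlinarith [(gauss_iter hω hmem (n + 1)).2.1]

/-- The fundamental identity `q_n ω - p_n = (-1)^n ∏_{k≤n} G^[k] ω`. -/
lemma beta_eq (hω : Irrational ω) (hmem : ω ∈ Ioo (0 : ℝ) 1) (n : ℕ) :
    (cfQ ω n : ℝ) * ω - (cfP ω n : ℝ) = (-1) ^ n * cfProd ω n := by
  induction n using Nat.twoStepInduction with
  | zero =>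
    simp [cfQ, cfP, cfProd]
  | one =>
    have hω0 : ω ≠ 0 := ne_of_gt hmem.1
    have hrel := cfA_rel (ω := ω) 0
    simp only [Function.iterate_zero_apply] at hrel
    have : cfProd ω 1 = ω * gaussMap^[1] ω := by
      simp [cfProd, Finset.prod_range_succ]
    rw [this]
    simp only [cfQ, cfP, hrel]
    field_simp
    push_cast; ring
  | more n ih0 ih1 =>
    have hx : gaussMap^[n + 1] ω ≠ 0 := ne_of_gt (gauss_iter hω hmem (n + 1)).2.1
    have hps : cfProd ω (n + 2) = cfProd ω n * gaussMap^[n+1] ω * gaussMap^[n+2] ω := by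
      rw [cfProd_succ, cfProd_succ]
    have hps1 : cfProd ω (n + 1) = cfProd ω n * gaussMap^[n+1] ω := cfProd_succ n
    set x1 := gaussMap^[n + 1] ω with hx1def
    set x2 := gaussMap^[n + 2] ω with hx2def
    have hrel : (cfA ω (n + 1) : ℝ) * x1 = 1 - x1 * x2 := by
      have h := cfA_rel (ω := ω) (n + 1)
      rw [← hx2def, ← hx1def] at h
      rw [h]
      field_simp
    rw [hps1] at ih1
    show ((cfA ω (n+1) * cfQ ω (n+1) + cfQ ω n : ℤ) : ℝ) * ω
        - ((cfA ω (n+1) * cfP ω (n+1) + cfP ω n : ℤ) : ℝ)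
        = (-1) ^ (n + 2) * cfProd ω (n + 2)
    rw [hps]
    push_cast
    linear_combination (cfA ω (n+1) : ℝ) * ih1 + ih0 - ((-1 : ℝ)^n * cfProd ω n) * hrel

lemma cf_det (n : ℕ) :
    cfP ω (n + 1) * cfQ ω n - cfP ω n * cfQ ω (n + 1) = (-1) ^ n := by
  induction n with
  | zero => simp [cfP, cfQ]
  | succ n ih =>
    show (cfA ω (n+1) * cfP ω (n+1) + cfP ω n) * cfQ ω (n+1)
        - cfP ω (n+1) * (cfA ω (n+1) * cfQ ω (n+1) + cfQ ω n) = (-1) ^ (n+1)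
    linear_combination (-1 : ℤ) * ih

lemma cfQ_pos (hω : Irrational ω) (hmem : ω ∈ Ioo (0 : ℝ) 1) (n : ℕ) :
    0 < cfQ ω n := by
  induction n using Nat.twoStepInduction with
  | zero => simp [cfQ]
  | one => simpa [cfQ] using lt_of_lt_of_le one_pos (cfA_pos hω hmem 0)
  | more n ih0 ih1 =>
    show 0 < cfA ω (n + 1) * cfQ ω (n + 1) + cfQ ω n
    nlinarith [cfA_pos hω hmem (n + 1)]

lemma cfQ_mono (hω : Irrational ω) (hmem : ω ∈ Ioo (0 : ℝ) 1) (n : ℕ) :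
    cfQ ω n ≤ cfQ ω (n + 1) := by
  cases n with
  | zero => simpa [cfQ] using cfA_pos hω hmem 0
  | succ n =>
    show cfQ ω (n + 1) ≤ cfA ω (n + 1) * cfQ ω (n + 1) + cfQ ω n
    nlinarith [cfA_pos hω hmem (n + 1), cfQ_pos hω hmem n, cfQ_pos hω hmem (n + 1)]

lemma cfQ_ge_nat (hω : Irrational ω) (hmem : ω ∈ Ioo (0 : ℝ) 1) (n : ℕ) :
    (n : ℤ) ≤ cfQ ω n := by
  induction n using Nat.twoStepInduction with
  | zero => simp [cfQ]
  | one => simpa [cfQ] using cfA_pos hω hmem 0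
  | more n ih0 ih1 =>
    show ((n : ℤ) + 2) ≤ cfA ω (n + 1) * cfQ ω (n + 1) + cfQ ω n
    push_cast at ih1
    nlinarith [cfA_pos hω hmem (n + 1), cfQ_pos hω hmem n, cfQ_pos hω hmem (n + 1)]

lemma cfQ_succ_le (hω : Irrational ω) (hmem : ω ∈ Ioo (0 : ℝ) 1) (n : ℕ) :
    cfQ ω (n + 1) ≤ 2 * cfA ω n * cfQ ω n := by
  cases n with
  | zero =>
    show cfA ω 0 ≤ 2 * cfA ω 0 * 1
    nlinarith [cfA_pos hω hmem 0]
  | succ n =>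
    show cfA ω (n + 1) * cfQ ω (n + 1) + cfQ ω n ≤ 2 * cfA ω (n + 1) * cfQ ω (n + 1)
    nlinarith [cfA_pos hω hmem (n + 1), cfQ_pos hω hmem n, cfQ_pos hω hmem (n + 1),
      cfQ_mono hω hmem n]

/-- golden-ratio growth of denominators. -/
lemma cfQ_ge_phi (hω : Irrational ω) (hmem : ω ∈ Ioo (0 : ℝ) 1) (n : ℕ) :
    ((1 + Real.sqrt 5) / 2) ^ (n - 1) ≤ (cfQ ω n : ℝ) := by
  have h5 : Real.sqrt 5 < 3 := by
    nlinarith [Real.sq_sqrt (by norm_num : (5:ℝ) ≥ 0), Real.sqrt_nonneg 5]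
  have h5' : 2 ≤ Real.sqrt 5 := by
    nlinarith [Real.sq_sqrt (by norm_num : (5:ℝ) ≥ 0), Real.sqrt_nonneg 5]
  set φ : ℝ := (1 + Real.sqrt 5) / 2 with hφ
  have hφ1 : 1 < φ := by rw [hφ]; linarith
  have hφ2 : φ < 2 := by rw [hφ]; linarith
  have hφsq : φ ^ 2 = φ + 1 := by
    rw [hφ]
    have : Real.sqrt 5 ^ 2 = 5 := Real.sq_sqrt (by norm_num)
    ring_nf
    nlinarith [this]
  induction n using Nat.twoStepInduction with
  | zero => simp [cfQ]
  | one =>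
    simp only [cfQ]
    have := cfA_pos hω hmem 0
    have : (1 : ℝ) ≤ (cfA ω 0 : ℝ) := by exact_mod_cast this
    simpa using this
  | more n ih0 ih1 =>
    have hq2 : cfQ ω (n + 1) + cfQ ω n ≤ cfQ ω (n + 2) := by
      show cfQ ω (n+1) + cfQ ω n ≤ cfA ω (n + 1) * cfQ ω (n + 1) + cfQ ω n
      nlinarith [cfA_pos hω hmem (n + 1), cfQ_pos hω hmem (n + 1)]
    have hq2' : (cfQ ω (n+1) : ℝ) + (cfQ ω n : ℝ) ≤ (cfQ ω (n+2) : ℝ) := by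
      exact_mod_cast hq2
    cases n with
    | zero =>
      have h1 : (1 : ℝ) ≤ (cfQ ω 1 : ℝ) := by
        have := cfQ_pos hω hmem 1; exact_mod_cast this
      have h0 : (1 : ℝ) ≤ (cfQ ω 0 : ℝ) := by norm_num [cfQ]
      have : φ ^ (2 - 1) = φ := by norm_num
      rw [this]
      linarith
    | succ n =>
      have e1 : n + 1 + 1 - 1 = n + 1 := rfl
      have e2 : n + 1 - 1 = n := rfl
      rw [e1] at ih1
      rw [e2] at ih0
      have e3 : n + 1 + 2 - 1 = n + 2 := rfl
      rw [e3]
      have : φ ^ (n + 2) = φ ^ (n+1) + φ ^ n := by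
        have : φ ^ (n + 2) = φ ^ n * φ ^ 2 := by ring
        rw [this, hφsq]; ring
      rw [this]
      linarith

lemma cf_exists_between (hω : Irrational ω) (hmem : ω ∈ Ioo (0 : ℝ) 1) (q : ℤ) (hq : 0 < q) :
    ∃ n, cfQ ω n ≤ q ∧ q < cfQ ω (n + 1) := by
  have hex : ∃ m, q < cfQ ω m := by
    refine ⟨q.toNat + 1, ?_⟩
    have h := cfQ_ge_nat hω hmem (q.toNat + 1)
    have : q < ((q.toNat + 1 : ℕ) : ℤ) := by omega
    omega
  classical
  have hm : q < cfQ ω (Nat.find hex) := Nat.find_spec hex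
  have hm0 : Nat.find hex ≠ 0 := by
    intro h
    rw [h] at hm
    simp [cfQ] at hm
    omega
  obtain ⟨k, hk⟩ := Nat.exists_eq_succ_of_ne_zero hm0
  have hk' : Nat.find hex = k + 1 := hk
  refine ⟨k, ?_, by rw [← hk']; exact hm⟩
  have := Nat.find_min hex (m := k) (by omega)
  omega

lemma q_beta_sum (hω : Irrational ω) (hmem : ω ∈ Ioo (0 : ℝ) 1) (n : ℕ) :
    (cfQ ω (n + 1) : ℝ) * cfProd ω n + (cfQ ω n : ℝ) * cfProd ω (n + 1) = 1 := by
  have hβn := beta_eq hω hmem n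
  have hβn1 := beta_eq hω hmem (n + 1)
  have hdet : (cfP ω (n+1) : ℝ) * (cfQ ω n : ℝ) - (cfP ω n : ℝ) * (cfQ ω (n+1) : ℝ)
      = (-1) ^ n := by exact_mod_cast congrArg (Int.cast : ℤ → ℝ) (cf_det (ω := ω) n)
  have h1 : ((-1 : ℝ) ^ n) * ((-1 : ℝ) ^ n) = 1 := by
    rw [← pow_add, ← two_mul, pow_mul]; norm_num
  linear_combination (-(((-1:ℝ)^n) * (cfQ ω (n+1) : ℝ))) * hβn
    + (((-1:ℝ)^n) * (cfQ ω n : ℝ)) * hβn1 + ((-1:ℝ)^n) * hdet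
    - ((cfQ ω (n+1) : ℝ) * cfProd ω n + (cfQ ω n : ℝ) * cfProd ω (n+1) - 1) * h1

/-- Best approximation property: if `0 < q < q_{n+1}` then `|qω - p| ≥ ∏_{k≤n} G^[k]ω`. -/
lemma best_approx (hω : Irrational ω) (hmem : ω ∈ Ioo (0 : ℝ) 1) (n : ℕ) (p q : ℤ)
    (hq : 0 < q) (hq' : q < cfQ ω (n + 1)) :
    cfProd ω n ≤ |(q : ℝ) * ω - (p : ℝ)| := by
  set x : ℤ := (-1) ^ n * (cfP ω (n + 1) * q - cfQ ω (n + 1) * p) with hxdef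
  set y : ℤ := (-1) ^ n * (cfQ ω n * p - cfP ω n * q) with hydef
  have hdet := cf_det (ω := ω) n
  have h1 : ((-1 : ℤ) ^ n) * ((-1 : ℤ) ^ n) = 1 := by
    rw [← pow_add, ← two_mul, pow_mul]; norm_num
  have hqeq : x * cfQ ω n + y * cfQ ω (n + 1) = q := by
    rw [hxdef, hydef]
    linear_combination ((-1 : ℤ) ^ n * q) * hdet + q * h1
  have hpeq : x * cfP ω n + y * cfP ω (n + 1) = p := by
    rw [hxdef, hydef]
    linear_combination ((-1 : ℤ) ^ n * p) * hdet + p * h1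
  have hβn := beta_eq hω hmem n
  have hβn1 := beta_eq hω hmem (n + 1)
  have hPn := cfProd_pos hω hmem n
  have hPn1 := cfProd_pos hω hmem (n + 1)
  have hqn := cfQ_pos hω hmem n
  have hqn1 := cfQ_pos hω hmem (n + 1)
  -- express q ω - p via x, y
  have hkey : (q : ℝ) * ω - (p : ℝ)
      = (-1) ^ n * ((x : ℝ) * cfProd ω n - (y : ℝ) * cfProd ω (n + 1)) := by
    have hq'' : ((x * cfQ ω n + y * cfQ ω (n + 1) : ℤ) : ℝ) = (q : ℝ) := by
      exact_mod_cast congrArg (Int.cast : ℤ → ℝ) hqeq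
    have hp'' : ((x * cfP ω n + y * cfP ω (n + 1) : ℤ) : ℝ) = (p : ℝ) := by
      exact_mod_cast congrArg (Int.cast : ℤ → ℝ) hpeq
    push_cast at hq'' hp''
    linear_combination (-ω) * hq'' + hp'' + (x : ℝ) * hβn + (y : ℝ) * hβn1
  rw [hkey, abs_mul, abs_pow, abs_neg, abs_one, one_pow, one_mul]
  -- now case analysis on x, y
  rcases eq_or_ne y 0 with hy | hy
  · -- q = x * q_n, so x ≥ 1
    have hxq : x * cfQ ω n = q := by rw [hy] at hqeq; simpa using hqeq
    have hx1 : 1 ≤ x := by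
      by_contra h
      push_neg at h
      have h' : x ≤ 0 := by omega
      nlinarith
    have hx1' : (1 : ℝ) ≤ (x : ℝ) := by exact_mod_cast hx1
    rw [hy]
    push_cast
    rw [zero_mul, sub_zero, abs_of_nonneg (by nlinarith)]
    nlinarith
  · rcases eq_or_ne x 0 with hx | hx
    · exfalso
      have hyq : y * cfQ ω (n + 1) = q := by rw [hx] at hqeq; simpa using hqeq
      rcases le_or_gt y 0 with h | h
      · nlinarith
      · have h1y : 1 ≤ y := h
        nlinarith
    · -- x ≠ 0, y ≠ 0: they must have opposite signs
      have hsign : (1 ≤ x ∧ y ≤ -1) ∨ (x ≤ -1 ∧ 1 ≤ y) := by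
        rcases hx.lt_or_gt with hxneg | hxpos
        · rcases hy.lt_or_gt with hyneg | hypos
          · exfalso; nlinarith
          · right; omega
        · rcases hy.lt_or_gt with hyneg | hypos
          · left; omega
          · exfalso; nlinarith
      rcases hsign with ⟨hx1, hy1⟩ | ⟨hx1, hy1⟩
      · have hx1' : (1 : ℝ) ≤ (x : ℝ) := by exact_mod_cast hx1
        have hy1' : (y : ℝ) ≤ -1 := by exact_mod_cast hy1
        have : cfProd ω n ≤ (x : ℝ) * cfProd ω n - (y : ℝ) * cfProd ω (n + 1) := by
          nlinarith
        calc cfProd ω n ≤ (x : ℝ) * cfProd ω n - (y : ℝ) * cfProd ω (n + 1) := this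
          _ ≤ |(x : ℝ) * cfProd ω n - (y : ℝ) * cfProd ω (n + 1)| := le_abs_self _
      · have hx1' : (x : ℝ) ≤ -1 := by exact_mod_cast hx1
        have hy1' : (1 : ℝ) ≤ (y : ℝ) := by exact_mod_cast hy1
        have : (x : ℝ) * cfProd ω n - (y : ℝ) * cfProd ω (n + 1) ≤ -(cfProd ω n) := by
          nlinarith
        calc cfProd ω n ≤ -((x : ℝ) * cfProd ω n - (y : ℝ) * cfProd ω (n + 1)) := by linarith
          _ ≤ |(x : ℝ) * cfProd ω n - (y : ℝ) * cfProd ω (n + 1)| := neg_le_abs _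

lemma prod_lower (hω : Irrational ω) (hmem : ω ∈ Ioo (0 : ℝ) 1) (n : ℕ) :
    1 ≤ 2 * (cfQ ω (n + 1) : ℝ) * cfProd ω n := by
  have h := q_beta_sum hω hmem n
  have h1 := cfProd_le hω hmem n
  have h2 := cfProd_pos hω hmem (n + 1)
  have h3 := cfProd_pos hω hmem n
  have h4 : (1 : ℝ) ≤ (cfQ ω n : ℝ) := by exact_mod_cast cfQ_pos hω hmem n
  have h5 : (cfQ ω n : ℝ) ≤ (cfQ ω (n + 1) : ℝ) := by exact_mod_cast cfQ_mono hω hmem n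
  nlinarith

lemma pq_eq_cfA (n : ℕ) : pq ω (n + 1) = cfA ω n := rfl

lemma one_le_pq (hω : Irrational ω) (hmem : ω ∈ Ioo (0 : ℝ) 1) {j : ℕ} (hj : 1 ≤ j) :
    (1 : ℝ) ≤ (pq ω j : ℝ) := by
  obtain ⟨k, rfl⟩ := Nat.exists_eq_add_of_le hj
  have : 1 ≤ pq ω (1 + k) := by
    have : pq ω (1 + k) = cfA ω k := by rw [Nat.add_comm]; rfl
    rw [this]; exact cfA_pos hω hmem k
  exact_mod_cast this

lemma one_le_Mprod (hω : Irrational ω) (hmem : ω ∈ Ioo (0 : ℝ) 1) (n : ℕ) :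
    1 ≤ Mprod ω n := by
  unfold Mprod
  calc (1 : ℝ) = ∏ j ∈ Finset.Icc 1 n, (1 : ℝ) := by simp
    _ ≤ ∏ j ∈ Finset.Icc 1 n, (pq ω j : ℝ) :=
      Finset.prod_le_prod (fun i _ => by norm_num)
        (fun i hi => one_le_pq hω hmem (Finset.mem_Icc.1 hi).1)

lemma pq_le_Mprod (hω : Irrational ω) (hmem : ω ∈ Ioo (0 : ℝ) 1) {j m : ℕ}
    (hj1 : 1 ≤ j) (hjm : j ≤ m) : (pq ω j : ℝ) ≤ Mprod ω m := by
  unfold Mprod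
  have hjmem : j ∈ Finset.Icc 1 m := Finset.mem_Icc.2 ⟨hj1, hjm⟩
  rw [← Finset.mul_prod_erase _ _ hjmem]
  have h1 : (1 : ℝ) ≤ ∏ i ∈ (Finset.Icc 1 m).erase j, (pq ω i : ℝ) := by
    calc (1 : ℝ) = ∏ i ∈ (Finset.Icc 1 m).erase j, (1 : ℝ) := by simp
      _ ≤ _ := Finset.prod_le_prod (fun i _ => by norm_num)
          (fun i hi => one_le_pq hω hmem (Finset.mem_Icc.1 (Finset.mem_of_mem_erase hi)).1)
  have h0 : (0 : ℝ) ≤ (pq ω j : ℝ) := le_trans zero_le_one (one_le_pq hω hmem hj1)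
  nlinarith [one_le_pq hω hmem hj1]

end CF

set_option maxHeartbeats 1000000 in
theorem KL_plus_imp_diophantine (ω T : ℝ) (N : ℕ) (hω : Irrational ω)
    (hmem : ω ∈ Ioo (0 : ℝ) 1) (hT : 0 < T)
    (hKL : ∀ n : ℕ, N ≤ n → Mprod ω n ≤ Real.exp ((kappa + T) * n)) :
    ∃ C : ℝ, 0 < C ∧
      IsDiophantine C (1 + (kappa + T) / Real.log ((1 + Real.sqrt 5) / 2)) ω := by
  classical
  set φ : ℝ := (1 + Real.sqrt 5) / 2 with hφdef
  have h5' : 2 ≤ Real.sqrt 5 := by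
    nlinarith [Real.sq_sqrt (by norm_num : (5:ℝ) ≥ 0), Real.sqrt_nonneg 5]
  have hφ1 : 1 < φ := by rw [hφdef]; linarith
  have hL : 0 < Real.log φ := Real.log_pos hφ1
  -- κ + T ≥ 0
  have hκT : 0 ≤ kappa + T := by
    by_contra hneg
    push_neg at hneg
    set n := max N 1 with hn
    have h1 : 1 ≤ Mprod ω n := one_le_Mprod hω hmem n
    have h2 := hKL n (le_max_left _ _)
    have hn1 : (1 : ℝ) ≤ (n : ℝ) := by
      have : 1 ≤ n := le_max_right _ _
      exact_mod_cast this
    have : Real.exp ((kappa + T) * n) < 1 := by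
      rw [Real.exp_lt_one_iff]
      nlinarith
    linarith
  set s : ℝ := (kappa + T) / Real.log φ with hsdef
  have hs0 : 0 ≤ s := div_nonneg hκT hL.le
  set E : ℝ := Real.exp ((kappa + T) * (N + 3)) with hEdef
  have hE0 : 0 < E := Real.exp_pos _
  refine ⟨1 / (4 * E), by positivity, ?_⟩
  intro p q hq
  obtain ⟨n, hn1, hn2⟩ := cf_exists_between hω hmem q hq
  have hq0R : (0 : ℝ) < (q : ℝ) := by exact_mod_cast hq
  have hq1R : (1 : ℝ) ≤ (q : ℝ) := by exact_mod_cast hq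
  -- lower bound on |qω - p|
  have hstep := best_approx hω hmem n p q hq hn2
  have hlow := prod_lower hω hmem n
  have hPn := cfProd_pos hω hmem n
  have hqn1 : (0 : ℝ) < (cfQ ω (n + 1) : ℝ) := by exact_mod_cast cfQ_pos hω hmem (n + 1)
  -- q_{n+1} ≤ 2 a q
  have haq : (cfQ ω (n + 1) : ℝ) ≤ 2 * (cfA ω n : ℝ) * (q : ℝ) := by
    have h1 := cfQ_succ_le hω hmem n
    have h2 : cfQ ω n ≤ q := hn1
    have ha := cfA_pos hω hmem n
    have : cfQ ω (n + 1) ≤ 2 * cfA ω n * q := by nlinarith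
    exact_mod_cast this
  have ha1 : (1 : ℝ) ≤ (cfA ω n : ℝ) := by exact_mod_cast cfA_pos hω hmem n
  -- main inequality: 1 ≤ 4 a q |qω - p|
  have hmain : 1 ≤ 4 * (cfA ω n : ℝ) * (q : ℝ) * |(q : ℝ) * ω - (p : ℝ)| := by
    have h1 : 2 * (cfQ ω (n+1) : ℝ) * cfProd ω n ≤ 4 * (cfA ω n : ℝ) * (q:ℝ) * cfProd ω n := by
      nlinarith
    have h2 : 4 * (cfA ω n : ℝ) * (q:ℝ) * cfProd ω n
        ≤ 4 * (cfA ω n : ℝ) * (q:ℝ) * |(q : ℝ) * ω - (p : ℝ)| := by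
      have : (0:ℝ) ≤ 4 * (cfA ω n : ℝ) * (q:ℝ) := by nlinarith
      exact mul_le_mul_of_nonneg_left hstep this
    linarith
  -- bound a = cfA ω n ≤ E * exp((κ+T) * (n-1))
  set k : ℕ := n - 1 with hkdef
  have hbound : (cfA ω n : ℝ) ≤ E * Real.exp ((kappa + T) * k) := by
    set m : ℕ := max (n + 1) N with hmdef
    have h1 : (cfA ω n : ℝ) ≤ Mprod ω m := by
      rw [← pq_eq_cfA]
      exact pq_le_Mprod hω hmem (by omega) (le_max_left _ _)
    have h2 := hKL m (le_max_right _ _)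
    have h3 : (m : ℝ) ≤ (k : ℝ) + N + 3 := by
      have : m ≤ k + N + 3 := by omega
      exact_mod_cast this
    have h4 : Real.exp ((kappa + T) * m) ≤ Real.exp ((kappa + T) * ((k : ℝ) + N + 3)) := by
      apply Real.exp_le_exp.2
      nlinarith
    have h5 : Real.exp ((kappa + T) * ((k : ℝ) + N + 3)) = E * Real.exp ((kappa + T) * k) := by
      rw [hEdef, ← Real.exp_add]
      ring_nf
    linarith
  -- q^s ≥ exp((κ+T) k)
  have hqs : Real.exp ((kappa + T) * k) ≤ (q : ℝ) ^ s := by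
    have hφk : φ ^ k ≤ (q : ℝ) := by
      calc φ ^ k ≤ (cfQ ω n : ℝ) := by
            have := cfQ_ge_phi hω hmem n
            rwa [← hkdef] at this
        _ ≤ (q : ℝ) := by exact_mod_cast hn1
    have hφk0 : (0 : ℝ) ≤ φ ^ k := by positivity
    have h1 : (φ ^ k : ℝ) ^ s ≤ (q : ℝ) ^ s := Real.rpow_le_rpow hφk0 hφk hs0
    have h2 : (φ ^ k : ℝ) ^ s = Real.exp ((kappa + T) * k) := by
      rw [← Real.rpow_natCast φ k, ← Real.rpow_mul (by linarith : (0:ℝ) ≤ φ),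
        Real.rpow_def_of_pos (by linarith : (0:ℝ) < φ)]
      rw [hsdef]
      congr 1
      field_simp
    linarith [h2 ▸ h1]
  have hqs0 : (0 : ℝ) < (q : ℝ) ^ s := Real.rpow_pos_of_pos hq0R s
  -- conclude
  have hτ : (q : ℝ) ^ (1 + s) = (q : ℝ) * (q : ℝ) ^ s := by
    rw [Real.rpow_add hq0R, Real.rpow_one]
  show 1 / (4 * E) / (q : ℝ) ^ (1 + s) ≤ |(q : ℝ) * ω - (p : ℝ)|
  clear_value φ s E k
  have hτ0 : (0 : ℝ) < (q : ℝ) ^ (1 + s) := Real.rpow_pos_of_pos hq0R _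
  have hA0 : (0 : ℝ) ≤ |(q : ℝ) * ω - (p : ℝ)| := abs_nonneg _
  have he0 : (0 : ℝ) < Real.exp ((kappa + T) * k) := Real.exp_pos _
  have t1 := mul_le_mul_of_nonneg_right hbound (mul_nonneg hq0R.le hA0)
  have c1 : 1 ≤ 4 * (E * Real.exp ((kappa + T) * k)) * (q : ℝ) * |(q : ℝ) * ω - (p : ℝ)| := by
    nlinarith [t1, hmain]
  have t2 := mul_le_mul_of_nonneg_left hqs
    (by positivity : (0:ℝ) ≤ 4 * E * (q : ℝ) * |(q : ℝ) * ω - (p : ℝ)|)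
  have c2 : 1 ≤ 4 * (E * (q : ℝ) ^ s) * (q : ℝ) * |(q : ℝ) * ω - (p : ℝ)| := by
    nlinarith [c1, t2]
  rw [div_le_iff₀ hτ0, div_le_iff₀ (by positivity : (0:ℝ) < 4 * E), hτ]
  nlinarith [c2]
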